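/- arXiv:1806.00758 — 4 statements merged into one kernel-verified Lean document; each statement's English description precedes it below -/
import Mathlib

section
/- Let Ω be a domain in ℂ, s, M > 0, and let 𝓕 be a family of holomorphic functions f : Ω → ℂ such that ∫_Ω |f|^s dm ≤ M^s for every f ∈ 𝓕. Then 𝓕 is locally uniformly bounded: for every compact K ⊆ Ω there exists C > 0 such that |f(z)| ≤ C for all f ∈ 𝓕 and z ∈ K. -/
open MeasureTheory Metric Real Set

lemma circle_mvp {f : ℂ → ℂ} {c : ℂ} {r : ℝ} (hr : 0 < r)
    (hc : ContinuousOn f (closedBall c r))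
    (hd : ∀ z ∈ ball c r, DifferentiableAt ℂ f z) :
    2 * π * ‖f c‖ ≤ ∫ θ in (0:ℝ)..(2*π), ‖f (circleMap c r θ)‖ := by
  have h := Complex.circleIntegral_sub_center_inv_smul_of_differentiable_on_off_countable hr
    Set.countable_empty hc (fun z hz => hd z hz.1)
  have h1 : ‖(∮ z in C(c, r), (z - c)⁻¹ • f z)‖ = 2 * π * ‖f c‖ := by
    rw [h, norm_smul]
    simp [Real.pi_nonneg, abs_of_nonneg]
  have h2 : ‖(∮ z in C(c, r), (z - c)⁻¹ • f z)‖ ≤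
      ∫ θ in (0:ℝ)..(2*π), ‖deriv (circleMap c r) θ • (circleMap c r θ - c)⁻¹ • f (circleMap c r θ)‖ := by
    exact intervalIntegral.norm_integral_le_integral_norm (by positivity)
  have h3 : ∀ θ : ℝ, ‖deriv (circleMap c r) θ • (circleMap c r θ - c)⁻¹ • f (circleMap c r θ)‖
      = ‖f (circleMap c r θ)‖ := by
    intro θ
    rw [deriv_circleMap, circleMap_sub_center, norm_smul, norm_smul, norm_mul, norm_inv]
    simp only [norm_circleMap_zero, Complex.norm_I, abs_of_pos hr, mul_one]
    field_simp
  rw [h1] at h2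
  refine h2.trans (le_of_eq ?_)
  exact intervalIntegral.integral_congr (fun θ _ => h3 θ)

lemma area_mvp {f : ℂ → ℂ} {c : ℂ} {R : ℝ} (hR : 0 < R)
    (hc : ContinuousOn f (closedBall c R))
    (hd : ∀ z ∈ ball c R, DifferentiableAt ℂ f z) :
    π * R ^ 2 * ‖f c‖ ≤ ∫ z in ball c R, ‖f z‖ := by
  set F : ℝ × ℝ → ℝ := fun p => p.1 * ‖f (circleMap c p.1 p.2)‖ with hF
  have hcm : Continuous fun p : ℝ × ℝ => circleMap c p.1 p.2 := by
    simp only [circleMap]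
    fun_prop
  have hFcont : ContinuousOn F (Icc 0 R ×ˢ Icc (-π) π) := by
    apply ContinuousOn.mul continuous_fst.continuousOn
    apply (hc.comp hcm.continuousOn ?_).norm
    rintro ⟨a, b⟩ ⟨⟨ha0, haR⟩, -⟩
    exact closedBall_subset_closedBall haR (circleMap_mem_closedBall c ha0 b)
  have hFint : IntegrableOn F (Ioo 0 R ×ˢ Ioo (-π) π) volume := by
    apply (hFcont.integrableOn_compact (isCompact_Icc.prod isCompact_Icc)).mono_set
    exact Set.prod_mono Ioo_subset_Icc_self Ioo_subset_Icc_self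
  -- Step A : change to polar coordinates
  have stepA : ∫ z in ball c R, ‖f z‖ = ∫ p in Ioo 0 R ×ˢ Ioo (-π) π, F p := by
    have e1 : ∫ z in ball c R, ‖f z‖ = ∫ w, (ball (0:ℂ) R).indicator (fun w => ‖f (c + w)‖) w := by
      rw [← integral_indicator measurableSet_ball, ← integral_add_left_eq_self _ c]
      congr 1 with w
      by_cases hw : w ∈ ball (0:ℂ) R
      · rw [indicator_of_mem hw, indicator_of_mem]
        simpa [mem_ball, dist_eq_norm] using hw
      · rw [indicator_of_notMem hw, indicator_of_notMem]
        simpa [mem_ball, dist_eq_norm] using hw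
    set G : ℝ × ℝ → ℝ :=
      fun p => p.1 • (ball (0:ℂ) R).indicator (fun w => ‖f (c + w)‖) (Complex.polarCoord.symm p)
      with hG
    have e2 : ∫ p in Ioi (0:ℝ) ×ˢ Ioo (-π) π, G p = ∫ p in Ioo 0 R ×ˢ Ioo (-π) π, G p := by
      apply setIntegral_eq_of_subset_of_forall_diff_eq_zero
        (measurableSet_Ioi.prod measurableSet_Ioo)
        (Set.prod_mono Ioo_subset_Ioi_self subset_rfl)
      rintro ⟨a, b⟩ ⟨⟨ha, hb⟩, hnot⟩
      have haR : R ≤ a := by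
        by_contra hlt
        exact hnot ⟨⟨ha, not_le.mp hlt⟩, hb⟩
      rw [hG]
      simp only
      rw [indicator_of_notMem, smul_zero]
      simp only [mem_ball, dist_eq_norm, sub_zero,
        Complex.norm_polarCoord_symm, not_lt]
      rw [abs_of_pos ha]
      exact haR
    have e3 : ∫ p in Ioo (0:ℝ) R ×ˢ Ioo (-π) π, G p = ∫ p in Ioo 0 R ×ˢ Ioo (-π) π, F p := by
      apply setIntegral_congr_fun ((measurableSet_Ioo).prod measurableSet_Ioo)
      rintro ⟨a, b⟩ ⟨ha, hb⟩
      have habs : ‖(Complex.polarCoord.symm (a, b))‖ = a := by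
        rw [Complex.norm_polarCoord_symm, abs_of_pos ha.1]
      rw [hG]
      simp only
      rw [indicator_of_mem]
      · simp only [smul_eq_mul, hF]
        congr 3
        rw [Complex.polarCoord_symm_apply, circleMap]
        push_cast
        rw [Complex.exp_mul_I]
      · simp only [mem_ball, dist_eq_norm, sub_zero, habs]
        exact ha.2
    have e4 : ∫ p in polarCoord.target, G p = ∫ w, (ball (0:ℂ) R).indicator (fun w => ‖f (c + w)‖) w :=
      Complex.integral_comp_polarCoord_symm _
    rw [e1, ← e4, polarCoord_target, e2, e3]
  -- Step B : Fubini
  have stepB : ∫ p in Ioo 0 R ×ˢ Ioo (-π) π, F p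
      = ∫ x in Ioo 0 R, ∫ y in Ioo (-π) π, F (x, y) := by
    rw [MeasureTheory.Measure.volume_eq_prod]
    exact setIntegral_prod F (by rwa [← MeasureTheory.Measure.volume_eq_prod])
  have hmarg : IntegrableOn (fun x => ∫ y in Ioo (-π) π, F (x, y)) (Ioo 0 R) volume := by
    have h1 : Integrable F ((volume.restrict (Ioo 0 R)).prod (volume.restrict (Ioo (-π) π))) := by
      rw [MeasureTheory.Measure.prod_restrict]
      rwa [IntegrableOn, MeasureTheory.Measure.volume_eq_prod] at hFint
    exact h1.integral_prod_left
  have inner_bound : ∀ x ∈ Ioo (0:ℝ) R, 2 * π * ‖f c‖ * x ≤ ∫ y in Ioo (-π) π, F (x, y) := by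
    intro x hx
    have eF : ∫ y in Ioo (-π) π, F (x, y) = x * ∫ y in Ioo (-π) π, ‖f (circleMap c x y)‖ := by
      simp only [hF]
      rw [← integral_const_mul]
    have eIoo : ∫ y in Ioo (-π) π, ‖f (circleMap c x y)‖
        = ∫ y in (-π)..π, ‖f (circleMap c x y)‖ := by
      rw [intervalIntegral.integral_of_le (by linarith [pi_pos]), integral_Ioc_eq_integral_Ioo]
    have hper : Function.Periodic (fun y => ‖f (circleMap c x y)‖) (2 * π) :=
      fun y => by simp [periodic_circleMap c x y]
    have eper : ∫ y in (-π)..π, ‖f (circleMap c x y)‖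
        = ∫ y in (0:ℝ)..(2*π), ‖f (circleMap c x y)‖ := by
      have h := hper.intervalIntegral_add_eq (-π) 0
      simpa [show -π + 2*π = π by ring] using h
    have hmv := circle_mvp hx.1 (hc.mono (closedBall_subset_closedBall hx.2.le))
      (fun z hz => hd z (ball_subset_ball hx.2.le hz))
    rw [eF, eIoo, eper]
    calc 2 * π * ‖f c‖ * x = x * (2 * π * ‖f c‖) := by ring
    _ ≤ x * ∫ y in (0:ℝ)..(2*π), ‖f (circleMap c x y)‖ :=
        mul_le_mul_of_nonneg_left hmv hx.1.le
  have hlin : IntegrableOn (fun x : ℝ => 2 * π * ‖f c‖ * x) (Ioo 0 R) volume :=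
    ((continuous_const.mul continuous_id).integrableOn_Icc (a := 0) (b := R)).mono_set
      Ioo_subset_Icc_self
  have outer : ∫ x in Ioo (0:ℝ) R, 2 * π * ‖f c‖ * x
      ≤ ∫ x in Ioo 0 R, ∫ y in Ioo (-π) π, F (x, y) :=
    setIntegral_mono_on hlin hmarg measurableSet_Ioo inner_bound
  have lhs_eq : ∫ x in Ioo (0:ℝ) R, 2 * π * ‖f c‖ * x = π * R ^ 2 * ‖f c‖ := by
    rw [integral_const_mul, ← integral_Ioc_eq_integral_Ioo,
      ← intervalIntegral.integral_of_le hR.le, integral_id]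
    ring
  rw [stepA, stepB, ← lhs_eq]
  exact outer

theorem stmt2 (Ω : Set ℂ) (hΩ : IsOpen Ω) (hconn : IsConnected Ω)
    (hproper : Ωᶜ.Nonempty) (s M : ℝ) (hs : 0 < s) (hM : 0 < M)
    (𝓕 : Set (ℂ → ℂ)) (hhol : ∀ f ∈ 𝓕, DifferentiableOn ℂ f Ω)
    (hbound : ∀ f ∈ 𝓕, (IntegrableOn (fun z => ‖f z‖ ^ s) Ω volume ∧
      ∫ z in Ω, ‖f z‖ ^ s ∂volume ≤ M ^ s)) :
    ∀ K : Set ℂ, IsCompact K → K ⊆ Ω →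
      ∃ C > 0, ∀ f ∈ 𝓕, ∀ z ∈ K, ‖f z‖ ≤ C := by
  intro K hK hKΩ
  obtain ⟨δ, hδ, hδΩ⟩ := hK.exists_thickening_subset_open hΩ hKΩ
  set R : ℝ := δ / 2 with hRdef
  have hR : 0 < R := by positivity
  have hball : ∀ z ∈ K, closedBall z R ⊆ Ω := by
    intro z hz w hw
    apply hδΩ
    rw [mem_thickening_iff]
    exact ⟨z, hz, lt_of_le_of_lt hw (by rw [hRdef]; linarith)⟩
  have hsub_int : ∀ f ∈ 𝓕, ∀ S : Set ℂ, S ⊆ Ω →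
      ∫ z in S, ‖f z‖ ^ s ≤ M ^ s := by
    intro f hf S hS
    refine le_trans (setIntegral_mono_set (hbound f hf).1 ?_ (HasSubset.Subset.eventuallyLE hS))
      (hbound f hf).2
    filter_upwards with w using Real.rpow_nonneg (norm_nonneg _) s
  have hcont : ∀ f ∈ 𝓕, ContinuousOn f Ω := fun f hf => (hhol f hf).continuousOn
  have hdiff : ∀ f ∈ 𝓕, ∀ z ∈ Ω, DifferentiableAt ℂ f z := by
    intro f hf z hz
    exact (hhol f hf).differentiableAt (hΩ.mem_nhds hz)
  have hnorm_int : ∀ f ∈ 𝓕, ∀ c : ℂ, ∀ r : ℝ, closedBall c r ⊆ Ω →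
      IntegrableOn (fun z => ‖f z‖) (ball c r) volume := by
    intro f hf c r hcr
    exact (((hcont f hf).mono hcr).norm.integrableOn_compact (isCompact_closedBall c r)).mono_set
      ball_subset_closedBall
  rcases le_or_gt 1 s with hs1 | hs1
  · -- case 1 ≤ s
    refine ⟨1 + M ^ s / (π * R ^ 2), by positivity, ?_⟩
    intro f hf z hz
    have hBΩ : closedBall z R ⊆ Ω := hball z hz
    have h1 := area_mvp hR ((hcont f hf).mono hBΩ)
      (fun w hw => hdiff f hf w (hBΩ (ball_subset_closedBall hw)))
    have hint1 : IntegrableOn (fun w => 1 + ‖f w‖ ^ s) (ball z R) volume :=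
      (integrableOn_const measure_ball_lt_top.ne).add
        (((hbound f hf).1.mono_set (ball_subset_closedBall.trans hBΩ)))
    have h2 : ∫ w in ball z R, ‖f w‖ ≤ ∫ w in ball z R, (1 + ‖f w‖ ^ s) := by
      refine setIntegral_mono_on (hnorm_int f hf z R hBΩ) hint1 measurableSet_ball ?_
      intro w _
      rcases le_or_gt (‖f w‖) 1 with hw1 | hw1
      · have : (0:ℝ) ≤ ‖f w‖ ^ s := Real.rpow_nonneg (norm_nonneg _) s
        linarith
      · have h5 : ‖f w‖ ^ (1:ℝ) ≤ ‖f w‖ ^ s := Real.rpow_le_rpow_of_exponent_le hw1.le hs1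
        rw [Real.rpow_one] at h5
        linarith
    have h3 : ∫ w in ball z R, (1 + ‖f w‖ ^ s) = (π * R ^ 2) + ∫ w in ball z R, ‖f w‖ ^ s := by
      rw [integral_add (integrableOn_const (C := (1:ℝ)) measure_ball_lt_top.ne)
        ((hbound f hf).1.mono_set (ball_subset_closedBall.trans hBΩ))]
      congr 1
      rw [setIntegral_const, smul_eq_mul, mul_one]
      rw [Measure.real, Complex.volume_ball]
      rw [ENNReal.toReal_mul]
      rw [ENNReal.toReal_pow, ENNReal.toReal_ofReal hR.le]
      simp [NNReal.coe_real_pi]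
      ring
    have h4 : ∫ w in ball z R, ‖f w‖ ^ s ≤ M ^ s :=
      hsub_int f hf _ (ball_subset_closedBall.trans hBΩ)
    have hπ : 0 < π * R ^ 2 := by positivity
    have : π * R ^ 2 * ‖f z‖ ≤ π * R ^ 2 + M ^ s := by linarith
    calc ‖f z‖ = (π * R ^ 2 * ‖f z‖) / (π * R ^ 2) := by field_simp
    _ ≤ (π * R ^ 2 + M ^ s) / (π * R ^ 2) := by
        exact (div_le_div_iff_of_pos_right hπ).mpr this
    _ = 1 + M ^ s / (π * R ^ 2) := by field_simp
  · -- case s < 1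
    set P : ℝ := (2:ℝ) ^ (2/s) with hP
    have hPpos : 0 < P := Real.rpow_pos_of_pos two_pos _
    set A₀ : ℝ := (P / π) ^ (1/s) * M with hA₀
    have hA₀pos : 0 < A₀ := by positivity
    refine ⟨A₀ / R ^ (2/s), by positivity, ?_⟩
    intro f hf z₀ hz₀
    have hBΩ : closedBall z₀ R ⊆ Ω := hball z₀ hz₀
    set h : ℂ → ℝ := fun w => (R - dist w z₀) ^ (2/s) * ‖f w‖ with hh
    have hhc : ContinuousOn h (closedBall z₀ R) := by
      apply ContinuousOn.mul
      · apply ContinuousOn.rpow_const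
        · exact (continuous_const.sub (continuous_id.dist continuous_const)).continuousOn
        · exact fun w _ => Or.inr (by positivity)
      · exact ((hcont f hf).mono hBΩ).norm
    obtain ⟨w₀, hw₀D, hmax⟩ := (isCompact_closedBall z₀ R).exists_isMaxOn
      ⟨z₀, mem_closedBall_self hR.le⟩ hhc
    set A := h w₀ with hA
    have hz₀h : R ^ (2/s) * ‖f z₀‖ ≤ A := by
      have h0 := hmax (mem_closedBall_self hR.le)
      simpa [hh, dist_self] using h0
    have hAnn : 0 ≤ A := le_trans (by positivity) hz₀h
    have hRp : 0 < R ^ (2/s) := Real.rpow_pos_of_pos hR _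
    have key : A ≤ A₀ := by
      by_cases ha : ‖f w₀‖ = 0
      · have hA0 : A = 0 := by
          show (R - dist w₀ z₀) ^ (2/s) * ‖f w₀‖ = 0
          rw [ha, mul_zero]
        linarith
      have hapos : 0 < ‖f w₀‖ := (norm_nonneg _).lt_of_ne (Ne.symm ha)
      have htR : dist w₀ z₀ ≤ R := mem_closedBall.mp hw₀D
      rcases eq_or_lt_of_le htR with hteq | htlt
      · have hA0 : A = 0 := by
          rw [hA, hh]
          simp only [hteq, sub_self]
          rw [Real.zero_rpow (by positivity : 2/s ≠ 0), zero_mul]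
        linarith
      · set t := dist w₀ z₀ with ht
        set ρ := (R - t)/2 with hρ
        have hρpos : 0 < ρ := by rw [hρ]; linarith
        have hρR : closedBall w₀ ρ ⊆ ball z₀ R := by
          intro w hw
          rw [mem_ball]
          calc dist w z₀ ≤ dist w w₀ + dist w₀ z₀ := dist_triangle _ _ _
          _ ≤ ρ + t := add_le_add (mem_closedBall.mp hw) le_rfl
          _ < R := by rw [hρ]; linarith
        have hρΩ : closedBall w₀ ρ ⊆ Ω := hρR.trans (ball_subset_closedBall.trans hBΩ)
        have hAval : A = (2*ρ) ^ (2/s) * ‖f w₀‖ := by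
          have h2ρ : 2 * ρ = R - dist w₀ z₀ := by rw [hρ, ht]; ring
          rw [hA, hh, h2ρ]
        have hρp : 0 < ρ^(2/s) := Real.rpow_pos_of_pos hρpos _
        have hpoint : ∀ w ∈ ball w₀ ρ, ‖f w‖ ≤ P * ‖f w₀‖ := by
          intro w hw
          have hmw : h w ≤ A := hmax (ball_subset_closedBall (hρR (ball_subset_closedBall hw)))
          have htri : dist w z₀ ≤ dist w w₀ + t := dist_triangle _ _ _
          have hwρ : dist w w₀ ≤ ρ := (mem_ball.mp hw).le
          have h6 : ρ ≤ R - dist w z₀ := by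
            have hρ2 : R - t = 2 * ρ := by rw [hρ]; ring
            linarith
          have h7 : ρ^(2/s) * ‖f w‖ ≤ h w := by
            rw [hh]
            exact mul_le_mul_of_nonneg_right
              (Real.rpow_le_rpow hρpos.le h6 (by positivity)) (norm_nonneg _)
          have h8 : ρ^(2/s) * ‖f w‖ ≤ P * ρ^(2/s) * ‖f w₀‖ := by
            have h9 : (2*ρ)^(2/s) = P * ρ^(2/s) := by
              rw [Real.mul_rpow (by norm_num) hρpos.le]
            calc ρ^(2/s) * ‖f w‖ ≤ h w := h7
            _ ≤ A := hmw
            _ = (2*ρ)^(2/s) * ‖f w₀‖ := hAval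
            _ = P * ρ^(2/s) * ‖f w₀‖ := by rw [h9]
          calc ‖f w‖ = ρ^(2/s) * ‖f w‖ / ρ^(2/s) := by field_simp
          _ ≤ P * ρ^(2/s) * ‖f w₀‖ / ρ^(2/s) := (div_le_div_iff_of_pos_right hρp).mpr h8
          _ = P * ‖f w₀‖ := by field_simp
        have harea := area_mvp hρpos ((hcont f hf).mono hρΩ)
          (fun w hw => hdiff f hf w (hρΩ (ball_subset_closedBall hw)))
        have hint2 : IntegrableOn (fun w => P^(1-s) * ‖f w₀‖^(1-s) * ‖f w‖^s) (ball w₀ ρ) volume :=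
          ((hbound f hf).1.mono_set (ball_subset_closedBall.trans hρΩ)).const_mul _
        have h10 : ∫ w in ball w₀ ρ, ‖f w‖
            ≤ ∫ w in ball w₀ ρ, P^(1-s) * ‖f w₀‖^(1-s) * ‖f w‖^s := by
          refine setIntegral_mono_on (hnorm_int f hf w₀ ρ hρΩ) hint2 measurableSet_ball ?_
          intro w hw
          have hb := hpoint w hw
          calc ‖f w‖ = ‖f w‖^((1-s)+s) := by
                rw [show (1-s)+s = (1:ℝ) by ring, Real.rpow_one]
          _ = ‖f w‖^(1-s) * ‖f w‖^s := by
                refine Real.rpow_add' (norm_nonneg _) ?_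
                rw [sub_add_cancel]; exact one_ne_zero
          _ ≤ (P*‖f w₀‖)^(1-s) * ‖f w‖^s :=
                mul_le_mul_of_nonneg_right
                  (Real.rpow_le_rpow (norm_nonneg _) hb (by linarith))
                  (Real.rpow_nonneg (norm_nonneg _) _)
          _ = P^(1-s) * ‖f w₀‖^(1-s) * ‖f w‖^s := by
                rw [Real.mul_rpow hPpos.le (norm_nonneg _)]
        have h11 : ∫ w in ball w₀ ρ, P^(1-s) * ‖f w₀‖^(1-s) * ‖f w‖^s
            ≤ P^(1-s) * ‖f w₀‖^(1-s) * M^s := by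
          simp_rw [mul_assoc, integral_const_mul, ← mul_assoc]
          exact mul_le_mul_of_nonneg_left
            (hsub_int f hf _ (ball_subset_closedBall.trans hρΩ)) (by positivity)
        have hmain : π * ρ^2 * ‖f w₀‖ ≤ P^(1-s) * ‖f w₀‖^(1-s) * M^s :=
          le_trans harea (h10.trans h11)
        have ha1s : 0 < ‖f w₀‖^(1-s) := Real.rpow_pos_of_pos hapos _
        have has : π * ρ^2 * ‖f w₀‖^s ≤ P^(1-s) * M^s := by
          refine le_of_mul_le_mul_right ?_ ha1s
          calc π * ρ^2 * ‖f w₀‖^s * ‖f w₀‖^(1-s)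
              = π * ρ^2 * ‖f w₀‖ := by
                rw [mul_assoc, ← Real.rpow_add hapos,
                  show s + (1-s) = (1:ℝ) by ring, Real.rpow_one]
          _ ≤ P^(1-s) * ‖f w₀‖^(1-s) * M^s := hmain
          _ = P^(1-s) * M^s * ‖f w₀‖^(1-s) := by ring
        have hAs : A^s = 4 * ρ^2 * ‖f w₀‖^s := by
          rw [hAval, Real.mul_rpow (by positivity) (norm_nonneg _),
            ← Real.rpow_mul (by positivity : (0:ℝ) ≤ 2*ρ), div_mul_cancel₀ _ hs.ne',
            show (2:ℝ) = ((2:ℕ):ℝ) by norm_num, Real.rpow_natCast]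
          ring
        have hP4 : P^(1-s) * 4 = P := by
          rw [hP, ← Real.rpow_mul (by norm_num : (0:ℝ) ≤ 2)]
          have h22 : (4:ℝ) = (2:ℝ)^((2:ℕ):ℝ) := by rw [Real.rpow_natCast]; norm_num
          rw [h22, ← Real.rpow_add two_pos]
          congr 1
          field_simp
          ring
        have hAsle : A^s ≤ P/π * M^s := by
          rw [hAs]
          calc 4*ρ^2*‖f w₀‖^s = 4/π * (π*ρ^2*‖f w₀‖^s) := by field_simp
          _ ≤ 4/π * (P^(1-s)*M^s) := mul_le_mul_of_nonneg_left has (by positivity)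
          _ = (P^(1-s)*4)/π*M^s := by ring
          _ = P/π*M^s := by rw [hP4]
        have hA₀s : A₀^s = P/π * M^s := by
          rw [hA₀, Real.mul_rpow (by positivity) hM.le,
            ← Real.rpow_mul (by positivity), one_div, inv_mul_cancel₀ hs.ne', Real.rpow_one]
        exact (Real.rpow_le_rpow_iff hAnn hA₀pos.le hs).mp (hAsle.trans_eq hA₀s.symm)
    calc ‖f z₀‖ = R^(2/s) * ‖f z₀‖ / R^(2/s) := by field_simp
    _ ≤ A₀ / R^(2/s) := (div_le_div_iff_of_pos_right hRp).mpr (hz₀h.trans key)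
end

section
/- Let Ω be a domain in ℂ, M > 0, and let 𝓕 be a family of holomorphic functions f : Ω → ℂ with ∫_Ω log⁺|f| dm ≤ M for all f ∈ 𝓕. Then 𝓕 is locally uniformly bounded on Ω. -/
open MeasureTheory Metric Set Filter intervalIntegral

local notation "π" => Real.pi

lemma logplus_continuousOn {f : ℂ → ℂ} {V : Set ℂ} (hf : ContinuousOn f V) (hV : IsOpen V) :
    ContinuousOn (fun w => max (Real.log ‖f w‖) 0) V := by
  intro w hw
  rcases eq_or_ne (f w) 0 with h0 | h0
  · -- eventually the function equals 0 near w
    have hev : ∀ᶠ w' in nhds w, max (Real.log ‖f w'‖) 0 = 0 := by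
      have h1 : ∀ᶠ w' in nhds w, w' ∈ V ∧ ‖f w'‖ < 1 := by
        have hc : ContinuousAt f w := hf.continuousAt (hV.mem_nhds hw)
        have : ∀ᶠ w' in nhds w, ‖f w'‖ < 1 := by
          have := hc.norm.eventually_lt_const (by simp [h0] : ‖f w‖ < 1)
          exact this
        exact (hV.eventually_mem hw).and this
      filter_upwards [h1] with w' hw'
      rcases eq_or_ne (f w') 0 with h2 | h2
      · simp [h2]
      · have : Real.log ‖f w'‖ ≤ 0 := Real.log_nonpos (norm_nonneg _) hw'.2.le
        simpa [max_eq_right this]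
    have : ContinuousAt (fun w => max (Real.log ‖f w‖) 0) w := by
      have hconst : ContinuousAt (fun _ : ℂ => (0:ℝ)) w := continuousAt_const
      exact ContinuousAt.congr hconst (by filter_upwards [hev] with x hx using hx.symm)
    exact this.continuousWithinAt
  · have hc : ContinuousAt f w := hf.continuousAt (hV.mem_nhds hw)
    have : ContinuousAt (fun w => max (Real.log ‖f w‖) 0) w := by
      have h1 : ContinuousAt (fun w => Real.log ‖f w‖) w :=
        (Real.continuousAt_log (by simpa using h0)).comp hc.norm
      exact h1.max continuousAt_const
    exact this.continuousWithinAt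

lemma circ_submean {f : ℂ → ℂ} {c : ℂ} {ρ s : ℝ} (hs : 0 < s) (hsρ : s < ρ)
    (hf : DifferentiableOn ℂ f (ball c ρ)) (hc : f c ≠ 0)
    (h0 : ∀ θ : ℝ, f (circleMap c s θ) ≠ 0) :
    2 * π * Real.log ‖f c‖ ≤ ∫ θ in (0:ℝ)..(2*π), Real.log ‖f (circleMap c s θ)‖ := by
  have hπ : (0:ℝ) < π := Real.pi_pos
  have hmaps : ∀ θ : ℝ, circleMap c s θ ∈ ball c ρ := by
    intro θ
    have h1 : circleMap c s θ ∈ sphere c s := circleMap_mem_sphere c hs.le θ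
    have : dist (circleMap c s θ) c = s := mem_sphere.mp h1
    simpa [mem_ball, this] using hsρ
  set u : ℝ → ℝ := fun θ => Real.log ‖f (circleMap c s θ)‖ with hu_def
  have hgc : Continuous fun θ => f (circleMap c s θ) :=
    hf.continuousOn.comp_continuous (continuous_circleMap c s) hmaps
  have hu : Continuous u := by
    rw [continuous_iff_continuousAt]
    intro θ
    exact (Real.continuousAt_log (by simpa using h0 θ)).comp (hgc.continuousAt).norm
  have huper : Function.Periodic u (2*π) := fun θ => by
    simp only [hu_def, (periodic_circleMap c s) θ]
  -- partial Riemann sums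
  set S : ℕ → ℝ → ℝ := fun n θ => ∑ j ∈ Finset.range n, u (θ + 2*π*j/n) with hS_def
  have hScont : ∀ n, Continuous (S n) := by
    intro n
    exact continuous_finset_sum _ fun j _ => hu.comp (continuous_id.add continuous_const)
  have hSper : ∀ n, Function.Periodic (S n) (2*π) := by
    intro n θ
    simp only [hS_def]
    refine Finset.sum_congr rfl fun j _ => ?_
    rw [show θ + 2*π + 2*π*j/n = θ + 2*π*j/n + 2*π by ring, huper]
  -- max principle step
  have hMP : ∀ n : ℕ, 0 < n → ∀ θm : ℝ, (∀ θ, S n θ ≤ S n θm) →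
      (n : ℝ) * Real.log ‖f c‖ ≤ S n θm := by
    intro n hn θm hθm
    set F : ℂ → ℂ := fun w => ∏ j ∈ Finset.range n,
      f (c + Complex.exp ((2*π*j/n : ℝ) * Complex.I) * (w - c)) with hF_def
    have habs1 : ∀ a : ℝ, ‖Complex.exp ((a:ℂ) * Complex.I)‖ = 1 := fun a =>
      Complex.norm_exp_ofReal_mul_I a
    have hFd : DifferentiableOn ℂ F (ball c ρ) := by
      apply DifferentiableOn.fun_finsetProd
      intro j _
      have hlin : Differentiable ℂ fun w : ℂ => c + Complex.exp ((2*π*j/n : ℝ) * Complex.I) * (w - c) :=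
        (differentiable_const _).add ((differentiable_id.sub_const c).const_mul _)
      apply hf.comp hlin.differentiableOn
      intro w hw
      have : dist (c + Complex.exp ((2*π*j/n : ℝ) * Complex.I) * (w - c)) c = dist w c := by
        simp only [dist_eq_norm, add_sub_cancel_left]
        rw [norm_mul]
        have h1 : ‖Complex.exp ((2*π*j/n : ℝ) * Complex.I)‖ = 1 := by
          exact habs1 _
        rw [h1, one_mul]
      rw [mem_ball, this]
      exact mem_ball.mp hw
    have hkey : ∀ w ∈ sphere c s, ‖F w‖ ≤ Real.exp (S n θm) := by
      intro w hw
      obtain ⟨θ₀, hθ₀⟩ : ∃ θ₀, circleMap c s θ₀ = w := by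
        have : w ∈ Set.range (circleMap c s) := by
          rw [range_circleMap, abs_of_pos hs]; exact hw
        exact this
      have hterm : ∀ j : ℕ, c + Complex.exp ((2*π*j/n : ℝ) * Complex.I) * (w - c)
          = circleMap c s (θ₀ + 2*π*j/n) := by
        intro j
        rw [← hθ₀]
        simp only [circleMap]
        rw [add_sub_cancel_left]
        rw [← mul_assoc]
        rw [mul_comm (Complex.exp _) ((s:ℂ))]
        rw [mul_assoc, ← Complex.exp_add]
        congr 1
        push_cast
        ring
      have : ‖F w‖ = ∏ j ∈ Finset.range n, ‖f (circleMap c s (θ₀ + 2*π*j/n))‖ := by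
        rw [hF_def]
        simp only [norm_prod]
        exact Finset.prod_congr rfl fun j _ => by rw [hterm j]
      rw [this]
      have hprod : ∏ j ∈ Finset.range n, ‖f (circleMap c s (θ₀ + 2*π*j/n))‖
          = Real.exp (S n θ₀) := by
        rw [hS_def, Real.exp_sum]
        exact Finset.prod_congr rfl fun j _ => by
          rw [hu_def, Real.exp_log (norm_pos_iff.mpr (h0 _))]
      rw [hprod]
      exact Real.exp_le_exp.mpr (hθm θ₀)
    have hFc : ‖F c‖ = ‖f c‖ ^ n := by
      rw [hF_def]
      simp only [sub_self, mul_zero, add_zero, norm_prod]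
      simp [Finset.prod_const]
    have hball : DiffContOnCl ℂ F (ball c s) := by
      constructor
      · exact hFd.mono (ball_subset_ball hsρ.le)
      · rw [closure_ball c hs.ne']
        exact hFd.continuousOn.mono (closedBall_subset_ball hsρ)
    have hmain : ‖F c‖ ≤ Real.exp (S n θm) := by
      apply Complex.norm_le_of_forall_mem_frontier_norm_le isBounded_ball hball
      · intro z hz
        rw [frontier_ball c hs.ne'] at hz
        exact hkey z hz
      · rw [closure_ball c hs.ne']
        exact mem_closedBall_self hs.le
    rw [hFc] at hmain
    have hfc_pos : 0 < ‖f c‖ := norm_pos_iff.mpr hc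
    calc (n:ℝ) * Real.log ‖f c‖ = Real.log (‖f c‖ ^ n) := by rw [Real.log_pow]
      _ ≤ Real.log (Real.exp (S n θm)) :=
          Real.log_le_log (pow_pos hfc_pos n) hmain
      _ = S n θm := Real.log_exp _
  -- the integral of S n over any interval of length 2π/n equals the integral of u over a period
  have hIntS : ∀ n : ℕ, 0 < n → ∀ a : ℝ,
      ∫ t in a..(a + 2*π/n), S n t = ∫ t in (0:ℝ)..(2*π), u t := by
    intro n hn a
    have hn' : (0:ℝ) < n := by exact_mod_cast hn
    set aseq : ℕ → ℝ := fun j => a + 2*π*j/n with haseq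
    have hint : ∀ b c : ℝ, IntervalIntegrable u volume b c := fun b c =>
      hu.intervalIntegrable b c
    calc ∫ t in a..(a + 2*π/n), S n t
        = ∑ j ∈ Finset.range n, ∫ t in a..(a+2*π/n), u (t + 2*π*j/n) := by
          rw [hS_def, intervalIntegral.integral_finset_sum]
          intro j _
          exact (hu.comp (continuous_id.add continuous_const)).intervalIntegrable _ _
      _ = ∑ j ∈ Finset.range n, ∫ t in (aseq j)..(aseq (j+1)), u t := by
          refine Finset.sum_congr rfl fun j _ => ?_
          have e1 : aseq j = a + 2*π*j/n := rfl
          have e2 : aseq (j+1) = a + 2*π/n + 2*π*j/n := by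
            simp only [haseq]
            push_cast
            field_simp
            ring
          rw [intervalIntegral.integral_comp_add_right u (2*π*j/n), e1, e2]
      _ = ∫ t in (aseq 0)..(aseq n), u t :=
          intervalIntegral.sum_integral_adjacent_intervals fun k _ => hint _ _
      _ = ∫ t in a..(a + 2*π), u t := by
          have e1 : aseq 0 = a := by simp [haseq]
          have e2 : aseq n = a + 2*π := by
            simp only [haseq]
            field_simp
          rw [e1, e2]
      _ = ∫ t in (0:ℝ)..(0 + 2*π), u t := huper.intervalIntegral_add_eq a 0
      _ = ∫ t in (0:ℝ)..(2*π), u t := by rw [zero_add]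
  -- approximate bound for every positive ε
  have hfinal : ∀ ε : ℝ, 0 < ε →
      2*π*Real.log ‖f c‖ ≤ (∫ θ in (0:ℝ)..(2*π), u θ) + 2*π*ε := by
    intro ε hε
    obtain ⟨δ, hδ, hδ'⟩ := Metric.uniformContinuousOn_iff.mp
      ((isCompact_Icc : IsCompact (Icc (0:ℝ) (8*π))).uniformContinuousOn_of_continuous
        hu.continuousOn) ε hε
    obtain ⟨n, hn⟩ := exists_nat_gt (max 1 (2*π/δ))
    have hone : (1:ℝ) < n := lt_of_le_of_lt (le_max_left _ _) hn
    have hn0 : (0:ℝ) < n := lt_trans zero_lt_one hone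
    have hn1 : 0 < n := by exact_mod_cast hn0
    have hh : 2*π/n < δ := by
      have h1 : 2*π/δ < n := lt_of_le_of_lt (le_max_right _ _) hn
      rw [div_lt_iff₀ hn0]
      calc 2*π < n * δ := by rwa [div_lt_iff₀ hδ] at h1
        _ = δ * n := mul_comm _ _
    have hhle : 2*π/n ≤ 2*π := by
      rw [div_le_iff₀ hn0]
      nlinarith [hπ]
    obtain ⟨θm, hθmem, hmax⟩ := (isCompact_Icc : IsCompact (Icc (0:ℝ) (2*π))).exists_isMaxOn
      ⟨0, by constructor <;> [rfl; positivity]⟩ (hScont n).continuousOn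
    have hglob : ∀ θ, S n θ ≤ S n θm := by
      intro θ
      have h2π : (0:ℝ) < 2*π := by positivity
      have hred : S n (θ - ⌊θ / (2*π)⌋*(2*π)) = S n θ := (hSper n).sub_int_mul_eq _
      have h1 : 0 ≤ θ - ⌊θ / (2*π)⌋*(2*π) := Int.sub_floor_div_mul_nonneg θ h2π
      have h2 : θ - ⌊θ / (2*π)⌋*(2*π) < 2*π := Int.sub_floor_div_mul_lt θ h2π
      rw [← hred]
      exact isMaxOn_iff.mp hmax _ ⟨h1, h2.le⟩
    have hMP' := hMP n hn1 θm hglob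
    -- pointwise bound on the small interval
    have hpt : ∀ t ∈ Icc θm (θm + 2*π/n), S n θm ≤ S n t + n*ε := by
      intro t ht
      have key : S n θm - S n t ≤ n*ε := by
        have h1 : S n θm - S n t
            = ∑ j ∈ Finset.range n, (u (θm + 2*π*j/n) - u (t + 2*π*j/n)) := by
          rw [hS_def, ← Finset.sum_sub_distrib]
        rw [h1]
        have h2 : ∀ j ∈ Finset.range n, u (θm + 2*π*j/n) - u (t + 2*π*j/n) ≤ ε := by
          intro j hj
          have hjn : (j:ℝ) ≤ n := by
            have := Finset.mem_range.mp hj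
            exact_mod_cast this.le
          have haj0 : 0 ≤ 2*π*j/n := by positivity
          have haj : 2*π*j/n ≤ 2*π := by
            rw [div_le_iff₀ hn0]
            nlinarith [hπ]
          have hθm0 : 0 ≤ θm := hθmem.1
          have hθm2 : θm ≤ 2*π := hθmem.2
          have ht1 : θm ≤ t := ht.1
          have ht2 : t ≤ θm + 2*π/n := ht.2
          have hmem1 : θm + 2*π*j/n ∈ Icc (0:ℝ) (8*π) := by
            constructor <;> nlinarith
          have hmem2 : t + 2*π*j/n ∈ Icc (0:ℝ) (8*π) := by
            constructor <;> nlinarith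
          have hdist : dist (θm + 2*π*j/n) (t + 2*π*j/n) < δ := by
            rw [Real.dist_eq]
            have : |θm + 2*π*j/n - (t + 2*π*j/n)| = |θm - t| := by ring_nf
            rw [this, abs_sub_comm, abs_of_nonneg (by linarith)]
            linarith
          have := hδ' _ hmem1 _ hmem2 hdist
          rw [Real.dist_eq] at this
          calc u (θm + 2*π*j/n) - u (t + 2*π*j/n) ≤ |u (θm + 2*π*j/n) - u (t + 2*π*j/n)| :=
            le_abs_self _
            _ ≤ ε := this.le
        calc ∑ j ∈ Finset.range n, (u (θm + 2*π*j/n) - u (t + 2*π*j/n))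
            ≤ ∑ _j ∈ Finset.range n, ε := Finset.sum_le_sum h2
          _ = n * ε := by simp [Finset.sum_const, nsmul_eq_mul]
      linarith
    have hab : θm ≤ θm + 2*π/n := by
      have : 0 < 2*π/n := by positivity
      linarith
    have c1 : 2*π*Real.log ‖f c‖ ≤ (2*π/n) * S n θm := by
      have h2 : 2*π*Real.log ‖f c‖ = (2*π/n) * ((n:ℝ) * Real.log ‖f c‖) := by
        field_simp
      rw [h2]
      exact mul_le_mul_of_nonneg_left hMP' (by positivity)
    have c2 : (2*π/n) * S n θm = ∫ _t in θm..(θm+2*π/n), S n θm := by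
      rw [intervalIntegral.integral_const]
      simp [smul_eq_mul]
    have c3 : (∫ _t in θm..(θm+2*π/n), S n θm) ≤ ∫ t in θm..(θm+2*π/n), (S n t + n*ε) :=
      intervalIntegral.integral_mono_on hab (intervalIntegrable_const)
        (((hScont n).add continuous_const).intervalIntegrable _ _) hpt
    have c4 : (∫ t in θm..(θm+2*π/n), (S n t + n*ε))
        = (∫ θ in (0:ℝ)..(2*π), u θ) + 2*π*ε := by
      rw [intervalIntegral.integral_add ((hScont n).intervalIntegrable _ _)
        (intervalIntegrable_const), hIntS n hn1 θm, intervalIntegral.integral_const]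
      congr 1
      simp [smul_eq_mul]
      field_simp
    linarith
  refine le_of_forall_pos_le_add fun ε' hε' => ?_
  have h := hfinal (ε'/(2*π)) (by positivity)
  have : 2*π*(ε'/(2*π)) = ε' := by field_simp
  linarith

lemma zeros_finite {f : ℂ → ℂ} {c : ℂ} {ρ R : ℝ} (hR : 0 < R) (hRρ : R < ρ)
    (hf : DifferentiableOn ℂ f (ball c ρ)) (hc : f c ≠ 0) :
    {w ∈ closedBall c R | f w = 0}.Finite := by
  set Z := {w ∈ closedBall c R | f w = 0} with hZ
  by_contra hinf
  rw [← Set.Infinite] at hinf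
  obtain ⟨x, hxK, hx⟩ := hinf.exists_accPt_of_subset_isCompact
    (isCompact_closedBall c R) (fun w hw => hw.1)
  have hxball : x ∈ ball c ρ := lt_of_le_of_lt (mem_closedBall.mp hxK) hRρ
  have han : AnalyticOnNhd ℂ f (ball c ρ) := hf.analyticOnNhd isOpen_ball
  rcases (han x hxball).eventually_eq_zero_or_eventually_ne_zero with hev | hev
  · have : f c = 0 := by
      have := han.eqOn_zero_of_preconnected_of_eventuallyEq_zero
        ((convex_ball c ρ).isPreconnected) hxball hev
      exact this (mem_ball_self (lt_trans hR hRρ))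
    exact hc this
  · rw [accPt_iff_frequently] at hx
    have hev' : ∀ᶠ y in nhds x, ¬(y ≠ x ∧ y ∈ Z) := by
      rw [eventually_nhdsWithin_iff] at hev
      filter_upwards [hev] with y hy
      rintro ⟨hyx, hyZ⟩
      exact hy hyx hyZ.2
    exact (hx.and_eventually hev').exists.elim fun y hy => hy.2 hy.1

lemma area_submean {f : ℂ → ℂ} {V : Set ℂ} (hV : IsOpen V) {c : ℂ} {R : ℝ} (hR : 0 < R)
    (hsub : closedBall c R ⊆ V) (hf : DifferentiableOn ℂ f V) (hc : f c ≠ 0) :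
    π * R^2 * Real.log ‖f c‖ ≤ ∫ w in ball c R, max (Real.log ‖f w‖) 0 := by
  have hπ : (0:ℝ) < π := Real.pi_pos
  -- enlarge the ball slightly
  obtain ⟨δ, hδ, hδsub⟩ := (isCompact_closedBall c R).exists_cthickening_subset_open hV hsub
  have hρsub : closedBall c (δ + R) ⊆ V := by
    rw [← cthickening_closedBall hδ.le hR.le c]
    exact hδsub
  set ρ := δ + R with hρ
  have hRρ : R < ρ := by simp [hρ]; linarith
  have hρ0 : 0 < ρ := lt_trans hR hRρ
  have hfρ : DifferentiableOn ℂ f (ball c ρ) := hf.mono ((ball_subset_closedBall).trans hρsub)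
  set L : ℂ → ℝ := fun w => max (Real.log ‖f w‖) 0 with hL
  have hLc : ContinuousOn L (ball c ρ) := logplus_continuousOn hfρ.continuousOn isOpen_ball
  have hLnn : ∀ w, 0 ≤ L w := fun w => le_max_right _ _
  -- finite set of bad radii
  have hZfin : {w ∈ closedBall c R | f w = 0}.Finite := zeros_finite hR hRρ hfρ hc
  set bad : Set ℝ := (fun w => dist w c) '' {w ∈ closedBall c R | f w = 0} with hbad
  have hbadfin : bad.Finite := hZfin.image _
  -- good radii give the circle inequality
  have hgood : ∀ s ∈ Ioo (0:ℝ) R, s ∉ bad →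
      2*π*Real.log ‖f c‖ ≤ ∫ θ in (0:ℝ)..(2*π), L (circleMap c s θ) := by
    intro s hs hsb
    have hs0 : 0 < s := hs.1
    have hnz : ∀ θ : ℝ, f (circleMap c s θ) ≠ 0 := by
      intro θ hzero
      apply hsb
      refine ⟨circleMap c s θ, ⟨?_, hzero⟩, ?_⟩
      · have : dist (circleMap c s θ) c = s := mem_sphere.mp (circleMap_mem_sphere c hs0.le θ)
        rw [mem_closedBall, this]; exact hs.2.le
      · exact mem_sphere.mp (circleMap_mem_sphere c hs0.le θ)
    have h1 := circ_submean hs0 (lt_trans hs.2 hRρ) hfρ hc hnz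
    refine le_trans h1 ?_
    have hucont : Continuous fun θ => Real.log ‖f (circleMap c s θ)‖ := by
      rw [continuous_iff_continuousAt]
      intro θ
      have hmem : circleMap c s θ ∈ ball c ρ := by
        have : dist (circleMap c s θ) c = s := mem_sphere.mp (circleMap_mem_sphere c hs0.le θ)
        rw [mem_ball, this]; exact lt_trans hs.2 hRρ
      have hgc : ContinuousAt (fun θ => f (circleMap c s θ)) θ :=
        (hfρ.continuousOn.continuousAt (isOpen_ball.mem_nhds hmem)).comp
          (continuous_circleMap c s).continuousAt
      exact (Real.continuousAt_log (by simpa using hnz θ)).comp hgc.norm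
    have hLcont : Continuous fun θ => L (circleMap c s θ) := by
      apply hLc.comp_continuous (continuous_circleMap c s)
      intro θ
      have : dist (circleMap c s θ) c = s := mem_sphere.mp (circleMap_mem_sphere c hs0.le θ)
      rw [mem_ball, this]; exact lt_trans hs.2 hRρ
    apply intervalIntegral.integral_mono_on (by positivity)
      (hucont.intervalIntegrable _ _) (hLcont.intervalIntegrable _ _)
    intro θ _
    exact le_max_left _ _
  -- the polar-coordinates computation
  set T : Set (ℝ × ℝ) := Ioo (0:ℝ) R ×ˢ Ioo (-π) π with hT
  set G : ℝ × ℝ → ℝ := fun p => p.1 • L (c + Complex.polarCoord.symm p) with hG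
  have hsymm_cont : Continuous fun p : ℝ × ℝ => c + Complex.polarCoord.symm p := by
    simp only [Complex.polarCoord_symm_apply]
    fun_prop
  have hdistp : ∀ p : ℝ × ℝ, dist (c + Complex.polarCoord.symm p) c = |p.1| := by
    intro p
    rw [dist_eq_norm, add_sub_cancel_left, Complex.norm_polarCoord_symm]
  have hK'cont : ContinuousOn G (Icc (0:ℝ) R ×ˢ Icc (-π) π) := by
    apply ContinuousOn.smul continuous_fst.continuousOn
    apply hLc.comp hsymm_cont.continuousOn
    intro p hp
    rw [mem_ball, hdistp, abs_of_nonneg hp.1.1]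
    exact lt_of_le_of_lt hp.1.2 hRρ
  have hGint : IntegrableOn G T := by
    apply (hK'cont.integrableOn_compact (isCompact_Icc.prod isCompact_Icc)).mono_set
    exact Set.prod_mono Ioo_subset_Icc_self Ioo_subset_Icc_self
  have hstep1 : ∫ w in ball c R, L w = ∫ p in T, G p := by
    have htrans : ∫ w in ball c R, L w
        = ∫ w, ((ball (0:ℂ) R).indicator (fun w => L (c + w))) w := by
      rw [← MeasureTheory.integral_indicator measurableSet_ball,
        ← integral_add_left_eq_self ((ball c R).indicator L) c]
      congr 1
      funext w
      by_cases hw : w ∈ ball (0:ℂ) R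
      · rw [Set.indicator_of_mem hw, Set.indicator_of_mem]
        rw [mem_ball, dist_eq_norm, add_sub_cancel_left]
        exact mem_ball_zero_iff.mp hw
      · rw [Set.indicator_of_notMem hw, Set.indicator_of_notMem]
        rw [mem_ball, dist_eq_norm, add_sub_cancel_left]
        exact fun h => hw (mem_ball_zero_iff.mpr h)
    rw [htrans, ← Complex.integral_comp_polarCoord_symm]
    have hcong : Set.EqOn
        (fun p : ℝ×ℝ => p.1 • ((ball (0:ℂ) R).indicator (fun w => L (c + w)))
          (Complex.polarCoord.symm p))
        (fun p => ({q : ℝ×ℝ | q.1 < R}).indicator G p) polarCoord.target := by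
      intro p hp
      have hp1 : 0 < p.1 := hp.1
      have hmem : Complex.polarCoord.symm p ∈ ball (0:ℂ) R ↔ p.1 < R := by
        rw [mem_ball_zero_iff, Complex.norm_polarCoord_symm,
          abs_of_pos hp1]
      show p.1 • (ball (0:ℂ) R).indicator (fun w => L (c + w)) (Complex.polarCoord.symm p)
          = ({q : ℝ×ℝ | q.1 < R}).indicator G p
      by_cases hpR : p.1 < R
      · rw [Set.indicator_of_mem (hmem.mpr hpR),
          Set.indicator_of_mem (show p ∈ {q : ℝ×ℝ | q.1 < R} from hpR)]
      · rw [Set.indicator_of_notMem (fun h => hpR (hmem.mp h)),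
          Set.indicator_of_notMem (show p ∉ {q : ℝ×ℝ | q.1 < R} from hpR)]
        exact smul_zero _
    have hsets : polarCoord.target ∩ {q : ℝ×ℝ | q.1 < R} = T := by
      rw [hT, show polarCoord.target = Set.Ioi (0:ℝ) ×ˢ Set.Ioo (-π) π from rfl]
      ext p
      simp only [Set.mem_inter_iff, Set.mem_prod, Set.mem_Ioi, Set.mem_Ioo, Set.mem_setOf_eq]
      tauto
    rw [MeasureTheory.setIntegral_congr_fun polarCoord.open_target.measurableSet hcong,
      MeasureTheory.setIntegral_indicator (measurableSet_lt measurable_fst measurable_const),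
      hsets]
  have hrestr : (volume : Measure (ℝ×ℝ)).restrict T
      = ((volume : Measure ℝ).restrict (Ioo (0:ℝ) R)).prod
        ((volume : Measure ℝ).restrict (Ioo (-π) π)) := by
    rw [hT, Measure.prod_restrict]
    rfl
  have hGint' : Integrable G (((volume : Measure ℝ).restrict (Ioo (0:ℝ) R)).prod
      ((volume : Measure ℝ).restrict (Ioo (-π) π))) := by
    rw [← hrestr]
    exact hGint
  have hfub : ∫ p in T, G p = ∫ s in Ioo (0:ℝ) R, ∫ θ in Ioo (-π) π, G (s, θ) := by
    rw [hrestr]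
    exact MeasureTheory.integral_prod G hGint'
  have hinner_int : Integrable (fun s => ∫ θ in Ioo (-π) π, G (s, θ))
      ((volume : Measure ℝ).restrict (Ioo (0:ℝ) R)) := hGint'.integral_prod_left
  have hcm : ∀ s θ : ℝ, c + Complex.polarCoord.symm (s, θ) = circleMap c s θ := by
    intro s θ
    rw [Complex.polarCoord_symm_apply]
    simp only [circleMap]
    congr 1
    rw [Complex.exp_mul_I, ← Complex.ofReal_cos, ← Complex.ofReal_sin]
  have hinner_ge : ∀ᵐ s ∂((volume : Measure ℝ).restrict (Ioo (0:ℝ) R)),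
      2*π*Real.log ‖f c‖ * s ≤ ∫ θ in Ioo (-π) π, G (s, θ) := by
    have h1 : ∀ᵐ s ∂((volume : Measure ℝ).restrict (Ioo (0:ℝ) R)), s ∉ bad :=
      ae_restrict_of_ae (measure_eq_zero_iff_ae_notMem.mp (hbadfin.measure_zero volume))
    have h2 : ∀ᵐ s ∂((volume : Measure ℝ).restrict (Ioo (0:ℝ) R)), s ∈ Ioo (0:ℝ) R :=
      ae_restrict_mem measurableSet_Ioo
    filter_upwards [h1, h2] with s hsb hs
    have hs0 : 0 < s := hs.1
    have hGs : ∀ θ, G (s, θ) = s * L (circleMap c s θ) := by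
      intro θ
      rw [hG]
      simp only [smul_eq_mul]
      rw [hcm]
    have hper : Function.Periodic (fun θ => L (circleMap c s θ)) (2*π) :=
      fun θ => congrArg L (periodic_circleMap c s θ)
    have heval : ∫ θ in Ioo (-π) π, G (s, θ)
        = s * ∫ θ in (0:ℝ)..(2*π), L (circleMap c s θ) := by
      simp_rw [hGs]
      rw [MeasureTheory.integral_const_mul]
      congr 1
      rw [← MeasureTheory.integral_Ioc_eq_integral_Ioo,
        ← intervalIntegral.integral_of_le (by linarith : (-π) ≤ π)]
      have h3 := hper.intervalIntegral_add_eq (-π) 0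
      rw [show -π + 2*π = π by ring] at h3
      rw [h3, zero_add]
    rw [heval, mul_comm (2*π*Real.log ‖f c‖) s]
    exact mul_le_mul_of_nonneg_left (hgood s hs hsb) hs0.le
  have hconst_int : Integrable (fun s => 2*π*Real.log ‖f c‖ * s)
      ((volume : Measure ℝ).restrict (Ioo (0:ℝ) R)) := by
    apply Integrable.mono_measure ?_ (Measure.restrict_mono Ioo_subset_Icc_self le_rfl)
    exact (continuous_const.mul continuous_id).continuousOn.integrableOn_compact isCompact_Icc
  have houter : ∫ s in Ioo (0:ℝ) R, 2*π*Real.log ‖f c‖ * s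
      = π * R^2 * Real.log ‖f c‖ := by
    rw [MeasureTheory.integral_const_mul, ← MeasureTheory.integral_Ioc_eq_integral_Ioo,
      ← intervalIntegral.integral_of_le hR.le, integral_id]
    ring
  calc π * R^2 * Real.log ‖f c‖ = ∫ s in Ioo (0:ℝ) R, 2*π*Real.log ‖f c‖ * s := houter.symm
    _ ≤ ∫ s in Ioo (0:ℝ) R, ∫ θ in Ioo (-π) π, G (s, θ) :=
        MeasureTheory.integral_mono_ae hconst_int hinner_int hinner_ge
    _ = ∫ p in T, G p := hfub.symm
    _ = ∫ w in ball c R, L w := hstep1.symm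

theorem stmt3 (Ω : Set ℂ) (hΩ : IsOpen Ω) (hconn : IsConnected Ω)
    (hproper : Ωᶜ.Nonempty) (M : ℝ) (hM : 0 < M)
    (𝓕 : Set (ℂ → ℂ)) (hhol : ∀ f ∈ 𝓕, DifferentiableOn ℂ f Ω)
    (hbound : ∀ f ∈ 𝓕, (IntegrableOn (fun z => max (Real.log ‖f z‖) 0) Ω volume ∧
      ∫ z in Ω, max (Real.log ‖f z‖) 0 ∂volume ≤ M)) :
    ∀ K : Set ℂ, IsCompact K → K ⊆ Ω →
      ∃ C > 0, ∀ f ∈ 𝓕, ∀ z ∈ K, ‖f z‖ ≤ C := by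
  intro K hK hKΩ
  have hπ : (0:ℝ) < π := Real.pi_pos
  obtain ⟨r, hr, hrsub⟩ := hK.exists_cthickening_subset_open hΩ hKΩ
  have hball : ∀ z ∈ K, closedBall z r ⊆ Ω := fun z hz =>
    (closedBall_subset_cthickening hz r).trans hrsub
  refine ⟨Real.exp (M / (π * r^2)), Real.exp_pos _, ?_⟩
  intro f hf z hz
  by_cases h1 : ‖f z‖ ≤ 1
  · calc ‖f z‖ ≤ 1 := h1
      _ ≤ Real.exp (M / (π * r^2)) := Real.one_le_exp (by positivity)
  · push_neg at h1
    have hfz : f z ≠ 0 := by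
      intro h
      rw [h] at h1
      simp at h1
      linarith
    have hsubm := area_submean hΩ hr (hball z hz) (hhol f hf) hfz
    have hcomp : (∫ w in ball z r, max (Real.log ‖f w‖) 0)
        ≤ ∫ w in Ω, max (Real.log ‖f w‖) 0 := by
      apply MeasureTheory.setIntegral_mono_set (hbound f hf).1
      · filter_upwards with w using le_max_right _ _
      · exact HasSubset.Subset.eventuallyLE
          ((ball_subset_closedBall).trans (hball z hz))
    have hlog : Real.log ‖f z‖ ≤ M / (π * r^2) := by
      rw [le_div_iff₀ (by positivity)]
      have := le_trans hsubm (le_trans hcomp (hbound f hf).2)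
      nlinarith [this]
    calc ‖f z‖ = Real.exp (Real.log ‖f z‖) := (Real.exp_log (by linarith)).symm
      _ ≤ Real.exp (M / (π * r^2)) := Real.exp_le_exp.mpr hlog
end

section
/- Let f : 𝔻(b,d) → ℂ be holomorphic. Then (3/8) d² log⁺|f(b)| ≤ (1/2π) ∫_{A} log⁺|f| dm, where A = {z : d/2 < |z - b| < d} and m is Lebesgue area measure (assuming the integral is finite). -/
open MeasureTheory Metric Complex Set ENNReal

lemma logmax_eq {t : ℝ} (ht : 0 ≤ t) : max (Real.log t) 0 = Real.log (max t 1) := by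
  rcases le_or_gt t 1 with h | h
  · rw [max_eq_right (Real.log_nonpos ht h), max_eq_right h, Real.log_one]
  · rw [max_eq_left (Real.log_nonneg h.le), max_eq_left h.le]

lemma continuous_logmax : Continuous fun t : ℝ => Real.log (max t 1) := by
  rw [continuous_iff_continuousAt]
  intro t
  exact (Real.continuousAt_log (by positivity)).comp
    ((continuous_id.max continuous_const).continuousAt)

lemma log_le_logmax {t : ℝ} (ht : 0 ≤ t) : Real.log t ≤ Real.log (max t 1) := by
  rw [← logmax_eq ht]; exact le_max_left _ _

lemma meanvalue {H : ℂ → ℂ} {c : ℂ} {R : ℝ} (hR : 0 < R)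
    (hH : DiffContOnCl ℂ H (ball c R)) :
    H c = (1 / (2 * Real.pi)) • ∫ θ in (0:ℝ)..(2 * Real.pi), H (circleMap c R θ) := by
  have h := hH.circleIntegral_sub_inv_smul (mem_ball_self hR)
  rw [circleIntegral] at h
  have h2 : ∀ θ : ℝ, (deriv (circleMap c R) θ) • (circleMap c R θ - c)⁻¹ • H (circleMap c R θ)
      = Complex.I * H (circleMap c R θ) := by
    intro θ
    rw [deriv_circleMap, circleMap_sub_center, smul_eq_mul, smul_eq_mul]
    have hne : circleMap 0 R θ ≠ 0 := by
      have := circleMap_ne_center (c := 0) (R := R) hR.ne' (θ := θ)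
      simpa using this
    field_simp
  simp only [h2] at h
  rw [intervalIntegral.integral_const_mul] at h
  have hπ : (2 * Real.pi * Complex.I : ℂ) ≠ 0 := by
    simp [Real.pi_ne_zero, Complex.I_ne_zero]
  rw [smul_eq_mul] at h
  have hHc : H c = (2 * Real.pi * Complex.I : ℂ)⁻¹ * Complex.I *
      ∫ x in (0:ℝ)..(2 * Real.pi), H (circleMap c R x) := by
    rw [mul_assoc, h, ← mul_assoc, inv_mul_cancel₀ hπ, one_mul]
  rw [hHc, real_smul]
  push_cast
  have : ((2:ℂ) * ↑Real.pi * Complex.I)⁻¹ * Complex.I = (1 / (2 * ↑Real.pi) : ℂ) := by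
    rw [mul_inv, mul_inv]
    field_simp
  rw [this]

lemma exists_entire (u : C(AddCircle (2 * Real.pi), ℂ))
    (hu : u ∈ Submodule.span ℂ (Set.range (@fourier (2 * Real.pi)))) :
    ∃ H K : ℂ → ℂ, Differentiable ℂ H ∧ Differentiable ℂ K ∧
      ∀ θ : ℝ, u θ = H (Complex.exp (θ * Complex.I)) +
        (starRingEnd ℂ) (K (Complex.exp (θ * Complex.I))) := by
  induction hu using Submodule.span_induction with
  | mem v hv =>
    obtain ⟨n, rfl⟩ := hv
    have key : ∀ θ : ℝ, (fourier n) (θ : AddCircle (2 * Real.pi)) =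
        Complex.exp (n * (θ * Complex.I)) := by
      intro θ
      rw [fourier_coe_apply]
      congr 1
      have hπ : (Real.pi : ℂ) ≠ 0 := by
        simpa using Complex.ofReal_ne_zero.mpr Real.pi_ne_zero
      push_cast
      field_simp
    rcases le_or_gt 0 n with hn | hn
    · refine ⟨fun z => z ^ n.toNat, 0, (differentiable_pow _), differentiable_const 0, ?_⟩
      intro θ
      simp only [Pi.zero_apply, map_zero, add_zero]
      rw [key θ, ← Complex.exp_nat_mul]
      congr 1
      have h1 : (n.toNat : ℂ) = (n : ℂ) :=
        mod_cast congrArg (Int.cast : ℤ → ℂ) (Int.toNat_of_nonneg hn)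
      rw [h1]
    · refine ⟨0, fun z => z ^ (-n).toNat, differentiable_const 0, differentiable_pow _, ?_⟩
      intro θ
      rw [key θ]
      simp only [Pi.zero_apply, zero_add]
      rw [← Complex.exp_nat_mul, ← Complex.exp_conj]
      congr 1
      have this1 : (((-n).toNat) : ℂ) = ((-n : ℤ) : ℂ) :=
        mod_cast congrArg (Int.cast : ℤ → ℂ) (Int.toNat_of_nonneg (by omega : (0:ℤ) ≤ -n))
      rw [this1]
      push_cast
      simp [Complex.conj_ofReal]
  | zero => exact ⟨0, 0, differentiable_const 0, differentiable_const 0, by simp⟩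
  | add v w _ _ hv hw =>
    obtain ⟨H1, K1, hH1, hK1, he1⟩ := hv
    obtain ⟨H2, K2, hH2, hK2, he2⟩ := hw
    exact ⟨H1 + H2, K1 + K2, hH1.add hH2, hK1.add hK2, fun θ => by
      simp [he1 θ, he2 θ]; ring⟩
  | smul c v _ hv =>
    obtain ⟨H, K, hH, hK, he⟩ := hv
    refine ⟨fun z => c * H z, fun z => (starRingEnd ℂ) c * K z,
      (differentiable_const c).mul hH, (differentiable_const _).mul hK, fun θ => ?_⟩
    simp [he θ]
    ring

lemma circle_ineq {f : ℂ → ℂ} {b : ℂ} {R r : ℝ} (hr : 0 < r) (hrR : r < R)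
    (hf : DifferentiableOn ℂ f (ball b R)) :
    2 * Real.pi * Real.log (max ‖f b‖ 1) ≤
      ∫ θ in Set.Ioo (-Real.pi) Real.pi,
        Real.log (max ‖f (circleMap b r θ)‖ 1) := by
  have hπ := Real.pi_pos
  set φ : ℝ → ℝ := fun θ => Real.log (max ‖f (circleMap b r θ)‖ 1) with hφdef
  have hmem : ∀ θ, circleMap b r θ ∈ ball b R := by
    intro θ
    have : circleMap b r θ ∈ sphere b |r| := circleMap_mem_sphere' b r θ
    rw [mem_sphere, abs_of_pos hr] at this
    rw [mem_ball, this]; exact hrR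
  have hfc : Continuous fun θ => f (circleMap b r θ) :=
    hf.continuousOn.comp_continuous (continuous_circleMap b r) hmem
  have hφcont : Continuous φ := continuous_logmax.comp hfc.norm
  have hφnn : ∀ θ, 0 ≤ φ θ := fun θ => Real.log_nonneg (le_max_right _ _)
  have hper : Function.Periodic φ (2 * Real.pi) := by
    intro θ
    simp only [hφdef]
    rw [(periodic_circleMap b r) θ]
  -- main estimate with ε
  have key : ∀ ε : ℝ, 0 < ε →
      Real.log (max ‖f b‖ 1) ≤
        (1 / (2 * Real.pi)) * (∫ θ in (0:ℝ)..(2 * Real.pi), φ θ) + ε := by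
    intro ε hε
    haveI : Fact (0 < 2 * Real.pi) := ⟨by positivity⟩
    have φperC : Function.Periodic (fun θ : ℝ => (φ θ : ℂ)) (2 * Real.pi) := by
      intro θ; simp [hper θ]
    have hliftcont : Continuous φperC.lift :=
      Continuous.quotient_liftOn' (by continuity) _
    set φC : C(AddCircle (2 * Real.pi), ℂ) := ⟨φperC.lift, hliftcont⟩ with hφC
    have hdense : Dense ((Submodule.span ℂ
        (Set.range (@fourier (2 * Real.pi)))) : Set C(AddCircle (2 * Real.pi), ℂ)) :=
      Submodule.dense_iff_topologicalClosure_eq_top.mpr span_fourier_closure_eq_top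
    obtain ⟨u, hu_mem, hu_dist⟩ := hdense.exists_dist_lt φC (half_pos hε)
    obtain ⟨H, K, hHd, hKd, hHK⟩ := exists_entire u hu_mem
    set G : ℂ → ℂ := fun z => H z + K z with hGdef
    have hG : Differentiable ℂ G := hHd.add hKd
    have hre : ∀ θ : ℝ, (G (Complex.exp (θ * Complex.I))).re = (u θ).re := by
      intro θ
      rw [hHK θ]
      simp [hGdef, Complex.add_re, Complex.conj_re]
    have happrox : ∀ θ : ℝ, |(u θ).re - φ θ| ≤ ε / 2 := by
      intro θ
      have h1 : dist (φC θ) (u θ) ≤ dist φC u := ContinuousMap.dist_apply_le_dist _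
      have h2 : φC (θ : AddCircle (2 * Real.pi)) = (φ θ : ℂ) := φperC.lift_coe θ
      have h3 : |(u θ).re - φ θ| ≤ ‖(u θ) - (φ θ : ℂ)‖ := by
        have := Complex.abs_re_le_norm ((u θ) - (φ θ : ℂ))
        simpa using this
      refine h3.trans ?_
      rw [← Complex.dist_eq, dist_comm]
      rw [h2] at h1
      exact h1.trans hu_dist.le
    have hup : ∀ θ : ℝ, (G (Complex.exp (θ * Complex.I))).re ≤ φ θ + ε / 2 := by
      intro θ
      have := abs_le.mp (happrox θ)
      rw [hre θ]; linarith [this.2]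
    have hlow : ∀ θ : ℝ, φ θ - ε / 2 ≤ (G (Complex.exp (θ * Complex.I))).re := by
      intro θ
      have := abs_le.mp (happrox θ)
      rw [hre θ]; linarith [this.1]
    -- the auxiliary holomorphic majorant
    set h : ℂ → ℂ := fun z => G ((z - b) / r) + ((ε / 2 : ℝ) : ℂ) with hhdef
    have hhdiff : Differentiable ℂ h :=
      (hG.comp ((differentiable_id.sub_const b).div_const r)).add_const _
    set F : ℂ → ℂ := fun z => f z * Complex.exp (-h z) with hFdef
    have hFd : DiffContOnCl ℂ F (ball b r) := by
      constructor
      · exact (hf.mono (ball_subset_ball hrR.le)).mul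
          ((Complex.differentiable_exp.comp hhdiff.neg).differentiableOn)
      · rw [closure_ball b hr.ne']
        exact (hf.continuousOn.mono (closedBall_subset_ball hrR)).mul
          ((Complex.continuous_exp.comp hhdiff.continuous.neg).continuousOn)
    -- h's real part on the circle
    have hcircle_re : ∀ θ : ℝ, (h (circleMap b r θ)).re
        = (G (Complex.exp (θ * Complex.I))).re + ε / 2 := by
      intro θ
      have hrne : (r : ℂ) ≠ 0 := Complex.ofReal_ne_zero.mpr hr.ne'
      have harg : (circleMap b r θ - b) / r = Complex.exp (θ * Complex.I) := by
        simp only [circleMap]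
        rw [add_sub_cancel_left, mul_div_cancel_left₀ _ hrne]
      simp only [hhdef, Complex.add_re, Complex.ofReal_re, harg]
    have hbound : ∀ z ∈ frontier (ball b r), ‖F z‖ ≤ 1 := by
      intro z hz
      rw [frontier_ball b hr.ne'] at hz
      have : z ∈ Set.range (circleMap b r) := by
        rw [range_circleMap, abs_of_pos hr]; exact hz
      obtain ⟨θ, rfl⟩ := this
      have hfle : ‖f (circleMap b r θ)‖ ≤ Real.exp ((h (circleMap b r θ)).re) := by
        have h1 : ‖f (circleMap b r θ)‖ ≤ Real.exp (φ θ) := by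
          rw [hφdef]
          simp only
          rw [Real.exp_log (lt_of_lt_of_le one_pos (le_max_right _ _))]
          exact le_max_left _ _
        refine h1.trans (Real.exp_le_exp.mpr ?_)
        rw [hcircle_re θ]
        linarith [hlow θ]
      rw [hFdef]
      simp only [norm_mul]
      rw [Complex.norm_exp, Complex.neg_re]
      calc ‖f (circleMap b r θ)‖ * Real.exp (-(h (circleMap b r θ)).re)
          ≤ Real.exp ((h (circleMap b r θ)).re) *
            Real.exp (-(h (circleMap b r θ)).re) :=
            mul_le_mul_of_nonneg_right hfle (Real.exp_pos _).le
        _ = 1 := by rw [← Real.exp_add]; simp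
    have hmax : ‖F b‖ ≤ 1 :=
      Complex.norm_le_of_forall_mem_frontier_norm_le isBounded_ball hFd hbound
        (subset_closure (mem_ball_self hr))
    -- extract: ‖f b‖ ≤ exp (Re h b)
    have hfb : ‖f b‖ ≤ Real.exp ((h b).re) := by
      rw [hFdef] at hmax
      simp only [norm_mul] at hmax
      rw [Complex.norm_exp, Complex.neg_re] at hmax
      have := mul_le_mul_of_nonneg_right hmax (Real.exp_pos ((h b).re)).le
      rwa [one_mul, mul_assoc, ← Real.exp_add, neg_add_cancel, Real.exp_zero, mul_one] at this
    -- mean value for G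
    have hmv : G 0 = (1 / (2 * Real.pi)) •
        ∫ θ in (0:ℝ)..(2 * Real.pi), G (circleMap 0 1 θ) :=
      meanvalue one_pos ⟨hG.differentiableOn, hG.continuous.continuousOn⟩
    have hcirc1 : ∀ θ : ℝ, circleMap 0 1 θ = Complex.exp (θ * Complex.I) := by
      intro θ; simp [circleMap]
    have hGcont : Continuous fun θ : ℝ => G (Complex.exp (θ * Complex.I)) :=
      hG.continuous.comp
        (Complex.continuous_exp.comp (Complex.continuous_ofReal.mul continuous_const))
    have hmv_re : (G 0).re = (1 / (2 * Real.pi)) *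
        ∫ θ in (0:ℝ)..(2 * Real.pi), (G (Complex.exp (θ * Complex.I))).re := by
      have hint : IntervalIntegrable (fun θ : ℝ => G (Complex.exp (θ * Complex.I)))
          volume 0 (2 * Real.pi) := hGcont.intervalIntegrable _ _
      have hre_int := Complex.reCLM.intervalIntegral_comp_comm hint
      simp only [Complex.reCLM_apply] at hre_int
      rw [hmv]
      simp only [hcirc1]
      rw [Complex.real_smul, Complex.re_ofReal_mul]
      congr 1
      exact hre_int.symm
    -- bound the integral of Re G
    have hGle : (∫ θ in (0:ℝ)..(2 * Real.pi), (G (Complex.exp (θ * Complex.I))).re)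
        ≤ (∫ θ in (0:ℝ)..(2 * Real.pi), φ θ) + 2 * Real.pi * (ε / 2) := by
      have h1 : (∫ θ in (0:ℝ)..(2 * Real.pi), (G (Complex.exp (θ * Complex.I))).re)
          ≤ ∫ θ in (0:ℝ)..(2 * Real.pi), (φ θ + ε / 2) := by
        refine intervalIntegral.integral_mono_on (by positivity) ?_ ?_ (fun θ _ => hup θ)
        · exact (Complex.continuous_re.comp hGcont).intervalIntegrable _ _
        · exact (hφcont.add continuous_const).intervalIntegrable _ _
      refine h1.trans_eq ?_
      rw [intervalIntegral.integral_add (hφcont.intervalIntegrable _ _)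
        (intervalIntegrable_const), intervalIntegral.integral_const, smul_eq_mul]
      ring
    -- conclude
    have hhb : (h b).re = (G 0).re + ε / 2 := by
      rw [hhdef]
      simp
    have hRe_nonneg : 0 ≤ (h b).re := by
      rw [hhb, hmv_re]
      have h0 : 0 ≤ ∫ θ in (0:ℝ)..(2 * Real.pi), (G (Complex.exp (θ * Complex.I))).re → True := fun _ => trivial
      have hint_low : (∫ θ in (0:ℝ)..(2 * Real.pi), (φ θ - ε/2))
          ≤ ∫ θ in (0:ℝ)..(2 * Real.pi), (G (Complex.exp (θ * Complex.I))).re := by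
        refine intervalIntegral.integral_mono_on (by positivity) ?_ ?_ (fun θ _ => hlow θ)
        · exact (hφcont.sub continuous_const).intervalIntegrable _ _
        · exact (Complex.continuous_re.comp hGcont).intervalIntegrable _ _
      have hφint_nn : 0 ≤ ∫ θ in (0:ℝ)..(2 * Real.pi), φ θ := by
        apply intervalIntegral.integral_nonneg (by positivity)
        intro θ _; exact hφnn θ
      have heq : (∫ θ in (0:ℝ)..(2 * Real.pi), (φ θ - ε/2))
          = (∫ θ in (0:ℝ)..(2 * Real.pi), φ θ) - 2 * Real.pi * (ε/2) := by
        rw [intervalIntegral.integral_sub (hφcont.intervalIntegrable _ _)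
          intervalIntegrable_const, intervalIntegral.integral_const, smul_eq_mul]
        ring
      rw [heq] at hint_low
      have : (1 / (2 * Real.pi)) * ((∫ θ in (0:ℝ)..(2 * Real.pi), φ θ) - 2 * Real.pi * (ε/2))
          ≤ (1 / (2 * Real.pi)) * ∫ θ in (0:ℝ)..(2 * Real.pi),
            (G (Complex.exp (θ * Complex.I))).re := by
        apply mul_le_mul_of_nonneg_left hint_low (by positivity)
      have hsimp : (1 / (2 * Real.pi)) * ((∫ θ in (0:ℝ)..(2 * Real.pi), φ θ)
          - 2 * Real.pi * (ε/2)) = (1 / (2 * Real.pi)) * (∫ θ in (0:ℝ)..(2 * Real.pi), φ θ)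
          - ε/2 := by field_simp
      rw [hsimp] at this
      nlinarith [mul_nonneg (le_of_lt (show (0:ℝ) < 1 / (2*Real.pi) by positivity)) hφint_nn]
    -- final chain
    have hlog : Real.log (max ‖f b‖ 1) ≤ (h b).re := by
      have hmaxle : max ‖f b‖ 1 ≤ Real.exp ((h b).re) :=
        max_le hfb (by rw [← Real.exp_zero]; exact Real.exp_le_exp.mpr hRe_nonneg)
      calc Real.log (max ‖f b‖ 1) ≤ Real.log (Real.exp ((h b).re)) :=
            Real.log_le_log (lt_of_lt_of_le one_pos (le_max_right _ _)) hmaxle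
        _ = (h b).re := Real.log_exp _
    refine hlog.trans ?_
    rw [hhb, hmv_re]
    have := mul_le_mul_of_nonneg_left hGle (show (0:ℝ) ≤ 1 / (2 * Real.pi) by positivity)
    have hsimp2 : (1 / (2 * Real.pi)) * ((∫ θ in (0:ℝ)..(2 * Real.pi), φ θ)
        + 2 * Real.pi * (ε / 2)) = (1 / (2 * Real.pi)) * (∫ θ in (0:ℝ)..(2 * Real.pi), φ θ)
        + ε / 2 := by field_simp
    rw [hsimp2] at this
    linarith
  -- pass to the limit in ε, convert interval to Ioo
  have hlim : Real.log (max ‖f b‖ 1) ≤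
      (1 / (2 * Real.pi)) * ∫ θ in (0:ℝ)..(2 * Real.pi), φ θ :=
    le_of_forall_pos_le_add (fun ε hε => key ε hε)
  have hshift : (∫ θ in (0:ℝ)..(2 * Real.pi), φ θ)
      = ∫ θ in Set.Ioo (-Real.pi) Real.pi, φ θ := by
    have h1 := hper.intervalIntegral_add_eq 0 (-Real.pi)
    rw [zero_add] at h1
    have h2 : -Real.pi + 2 * Real.pi = Real.pi := by ring
    rw [h2] at h1
    rw [h1, intervalIntegral.integral_of_le (by linarith), integral_Ioc_eq_integral_Ioo]
  rw [hshift] at hlim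
  have h2 : 2 * Real.pi * (1 / (2 * Real.pi) *
      ∫ θ in Set.Ioo (-Real.pi) Real.pi, φ θ) = ∫ θ in Set.Ioo (-Real.pi) Real.pi, φ θ := by
    field_simp
  have h3 := mul_le_mul_of_nonneg_left hlim (show (0:ℝ) ≤ 2 * Real.pi by positivity)
  rw [h2] at h3
  exact h3

lemma lintegral_polar_real (F : ℝ × ℝ → ℝ≥0∞) :
    ∫⁻ p in polarCoord.target, ENNReal.ofReal p.1 * F (polarCoord.symm p) = ∫⁻ p, F p := by
  set B : ℝ × ℝ → ℝ × ℝ →L[ℝ] ℝ × ℝ := fun p =>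
    LinearMap.toContinuousLinearMap (Matrix.toLin (Module.Basis.finTwoProd ℝ) (Module.Basis.finTwoProd ℝ)
      !![Real.cos p.2, -p.1 * Real.sin p.2; Real.sin p.2, p.1 * Real.cos p.2])
  have B_det : ∀ p, (B p).det = p.1 := by
    intro p
    conv_rhs => rw [← one_mul p.1, ← Real.cos_sq_add_sin_sq p.2]
    simp only [B, neg_mul, LinearMap.det_toContinuousLinearMap, LinearMap.det_toLin,
      Matrix.det_fin_two_of, sub_neg_eq_add]
    ring
  symm
  calc
    ∫⁻ p, F p = ∫⁻ p in polarCoord.source, F p := by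
      rw [← setLIntegral_univ]
      exact (setLIntegral_congr polarCoord_source_ae_eq_univ.symm)
    _ = ∫⁻ p in polarCoord.symm '' polarCoord.target, F p := by
      rw [OpenPartialHomeomorph.symm_image_target_eq_source]
    _ = ∫⁻ p in polarCoord.target, ENNReal.ofReal |(B p).det| * F (polarCoord.symm p) := by
      apply lintegral_image_eq_lintegral_abs_det_fderiv_mul volume
        polarCoord.open_target.measurableSet
        (fun p _ => (hasFDerivAt_polarCoord_symm p).hasFDerivWithinAt)
        polarCoord.symm.injOn
    _ = ∫⁻ p in polarCoord.target, ENNReal.ofReal p.1 * F (polarCoord.symm p) := by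
      apply setLIntegral_congr_fun_ae polarCoord.open_target.measurableSet
      filter_upwards with p hp
      rw [B_det, abs_of_pos hp.1]

lemma lintegral_polar_complex (F : ℂ → ℝ≥0∞) :
    ∫⁻ p in polarCoord.target, ENNReal.ofReal p.1 * F (Complex.polarCoord.symm p)
      = ∫⁻ z, F z := by
  rw [← (Complex.volume_preserving_equiv_real_prod.symm).lintegral_comp_emb
    Complex.measurableEquivRealProd.symm.measurableEmbedding, ← lintegral_polar_real]
  rfl

lemma polar_symm_eq (p : ℝ × ℝ) :
    Complex.polarCoord.symm p = p.1 * Complex.exp (p.2 * Complex.I) := by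
  rw [Complex.polarCoord_symm_apply, Complex.exp_mul_I]
  simp [Complex.ofReal_cos, Complex.ofReal_sin]

theorem stmt8 (b : ℂ) (d : ℝ) (hd : 0 < d)
    (f : ℂ → ℂ) (hf : DifferentiableOn ℂ f (ball b d))
    (hint : IntegrableOn (fun z => max (Real.log ‖f z‖) 0)
      {z : ℂ | d / 2 < dist z b ∧ dist z b < d} volume) :
    (3 / 8) * d ^ 2 * max (Real.log ‖f b‖) 0 ≤
      (1 / (2 * Real.pi)) *
        ∫ z in {z : ℂ | d / 2 < dist z b ∧ dist z b < d},
          max (Real.log ‖f z‖) 0 ∂volume := by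
  have hπ := Real.pi_pos
  have hrw : ∀ z : ℂ, max (Real.log ‖f z‖) 0 = Real.log (max ‖f z‖ 1) :=
    fun z => logmax_eq (norm_nonneg _)
  simp only [hrw] at hint ⊢
  set g : ℂ → ℝ := fun z => Real.log (max ‖f z‖ 1) with hg
  set A : Set ℂ := {z : ℂ | d / 2 < dist z b ∧ dist z b < d} with hA
  set L : ℝ := Real.log (max ‖f b‖ 1) with hL
  have hLnn : 0 ≤ L := Real.log_nonneg (le_max_right _ _)
  have hgnn : ∀ z, 0 ≤ g z := fun z => Real.log_nonneg (le_max_right _ _)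
  have hAopen : IsOpen A := by
    rw [hA, Set.setOf_and]
    exact (isOpen_lt continuous_const (continuous_id.dist continuous_const)).inter
      (isOpen_lt (continuous_id.dist continuous_const) continuous_const)
  have hAmeas : MeasurableSet A := hAopen.measurableSet
  have hgcontOn : ContinuousOn g (ball b d) :=
    continuous_logmax.comp_continuousOn hf.continuousOn.norm
  -- Step 1: integral = toReal of lintegral
  have h1 : (∫ z in A, g z ∂volume) = (∫⁻ z in A, ENNReal.ofReal (g z)).toReal := by
    rw [integral_eq_lintegral_of_nonneg_ae (Filter.Eventually.of_forall fun z => hgnn z)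
      hint.aestronglyMeasurable]
  have hfin : (∫⁻ z in A, ENNReal.ofReal (g z)) ≠ ⊤ := by
    have hfi := hint.2
    have heq : (∫⁻ z in A, ENNReal.ofReal (g z)) = ∫⁻ z in A, ‖g z‖ₑ :=
      lintegral_congr fun z => (Real.enorm_eq_ofReal (hgnn z)).symm
    rw [heq]
    exact ne_of_lt hfi
  -- Step 2: main lower bound via polar coordinates
  have h2 : ENNReal.ofReal (2 * Real.pi * ((3 / 8) * d ^ 2 * L))
      ≤ ∫⁻ z in A, ENNReal.ofReal (g z) := by
    set A0 : Set ℂ := {w : ℂ | d / 2 < ‖w‖ ∧ ‖w‖ < d} with hA0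
    set F : ℂ → ℝ≥0∞ := A0.indicator (fun w => ENNReal.ofReal (g (b + w))) with hF
    have hstep1 : (∫⁻ z in A, ENNReal.ofReal (g z)) = ∫⁻ w, F w := by
      rw [← lintegral_indicator hAmeas]
      rw [← MeasureTheory.lintegral_add_left_eq_self
        (fun z => A.indicator (fun z => ENNReal.ofReal (g z)) z) b]
      apply lintegral_congr
      intro w
      rw [hF]
      by_cases hw : w ∈ A0
      · rw [Set.indicator_of_mem hw, Set.indicator_of_mem]
        rw [hA]
        simp only [Set.mem_setOf_eq, Complex.dist_eq, add_sub_cancel_left]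
        exact hw
      · rw [Set.indicator_of_notMem hw, Set.indicator_of_notMem]
        rw [hA]
        simp only [Set.mem_setOf_eq, Complex.dist_eq, add_sub_cancel_left]
        exact hw
    rw [hstep1, ← lintegral_polar_complex F]
    set S : Set (ℝ × ℝ) := Set.Ioo (d/2) d ×ˢ Set.Ioo (-Real.pi) Real.pi with hS
    have hSsub : S ⊆ polarCoord.target := by
      rw [hS, polarCoord_target]
      rintro ⟨r, θ⟩ ⟨hr, hθ⟩
      exact ⟨lt_trans (by linarith) hr.1, hθ⟩
    have hSmeas : MeasurableSet S := measurableSet_Ioo.prod measurableSet_Ioo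
    have habs : ∀ p : ℝ × ℝ, p ∈ polarCoord.target →
        ‖Complex.polarCoord.symm p‖ = p.1 := by
      intro p hp
      rw [Complex.norm_polarCoord_symm, abs_of_pos]
      rw [polarCoord_target] at hp
      exact hp.1
    have hstep2 : (∫⁻ p in polarCoord.target,
          ENNReal.ofReal p.1 * F (Complex.polarCoord.symm p))
        = ∫⁻ p in polarCoord.target, S.indicator (fun p => ENNReal.ofReal p.1
            * ENNReal.ofReal (g (b + p.1 * Complex.exp (p.2 * Complex.I)))) p := by
      apply setLIntegral_congr_fun_ae polarCoord.open_target.measurableSet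
      filter_upwards with p hp
      rw [hF]
      by_cases hmem : p ∈ S
      · rw [Set.indicator_of_mem hmem, Set.indicator_of_mem, polar_symm_eq]
        rw [hA0]
        simp only [Set.mem_setOf_eq]
        rw [habs p hp]
        rw [hS] at hmem
        exact ⟨hmem.1.1, hmem.1.2⟩
      · rw [Set.indicator_of_notMem hmem, Set.indicator_of_notMem, mul_zero]
        rw [hA0]
        simp only [Set.mem_setOf_eq]
        rw [habs p hp]
        intro hcon
        apply hmem
        rw [hS]
        rw [polarCoord_target] at hp
        exact ⟨⟨hcon.1, hcon.2⟩, hp.2⟩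
    rw [hstep2, lintegral_indicator hSmeas, Measure.restrict_restrict hSmeas,
      Set.inter_eq_self_of_subset_left hSsub]
    -- Tonelli
    have hball : ∀ p : ℝ × ℝ, p ∈ S →
        b + (p.1 : ℂ) * Complex.exp (p.2 * Complex.I) ∈ ball b d := by
      rintro ⟨r, θ⟩ ⟨hr, _⟩
      have hrpos : 0 < r := lt_trans (by linarith) hr.1
      rw [mem_ball, Complex.dist_eq, add_sub_cancel_left, norm_mul, Complex.norm_real, Real.norm_eq_abs,
        Complex.norm_exp]
      have hre : ((θ : ℂ) * Complex.I).re = 0 := by simp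
      rw [hre, Real.exp_zero, mul_one, abs_of_pos hrpos]
      exact hr.2
    have hmapcont : Continuous fun p : ℝ × ℝ =>
        b + (p.1 : ℂ) * Complex.exp (p.2 * Complex.I) :=
      continuous_const.add ((Complex.continuous_ofReal.comp continuous_fst).mul
        (Complex.continuous_exp.comp
          ((Complex.continuous_ofReal.comp continuous_snd).mul continuous_const)))
    have hcontS : ContinuousOn
        (fun p : ℝ × ℝ => g (b + p.1 * Complex.exp (p.2 * Complex.I))) S :=
      hgcontOn.comp hmapcont.continuousOn (fun p hp => hball p hp)
    have haemeas : AEMeasurable (fun p : ℝ × ℝ => ENNReal.ofReal p.1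
        * ENNReal.ofReal (g (b + p.1 * Complex.exp (p.2 * Complex.I))))
        (volume.restrict S) :=
      (ENNReal.measurable_ofReal.comp measurable_fst).aemeasurable.mul
        (ENNReal.measurable_ofReal.comp_aemeasurable (hcontS.aemeasurable hSmeas))
    have hres : volume.restrict S
        = ((volume : Measure ℝ).restrict (Set.Ioo (d/2) d)).prod
          ((volume : Measure ℝ).restrict (Set.Ioo (-Real.pi) Real.pi)) := by
      rw [hS, Measure.prod_restrict, ← MeasureTheory.Measure.volume_eq_prod ℝ ℝ]
    rw [hres] at haemeas
    rw [hres, MeasureTheory.lintegral_prod _ haemeas]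
    -- inner bound
    have hinner : ∀ r ∈ Set.Ioo (d/2) d,
        ENNReal.ofReal (r * (2 * Real.pi * L)) ≤
          ∫⁻ θ in Set.Ioo (-Real.pi) Real.pi, ENNReal.ofReal r
            * ENNReal.ofReal (g (b + r * Complex.exp (θ * Complex.I))) := by
      intro r hr
      have hrpos : 0 < r := lt_trans (by linarith) hr.1
      rw [lintegral_const_mul' _ _ ENNReal.ofReal_ne_top]
      have hcirc := circle_ineq hrpos hr.2 hf
      have hccont : Continuous fun θ : ℝ => g (circleMap b r θ) := by
        apply hgcontOn.comp_continuous (continuous_circleMap b r)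
        intro θ
        have := circleMap_mem_sphere' b r θ
        rw [mem_sphere, abs_of_pos hrpos] at this
        rw [mem_ball, this]
        exact hr.2
      have hInt : IntegrableOn (fun θ => g (circleMap b r θ))
          (Set.Ioo (-Real.pi) Real.pi) :=
        ((hccont.intervalIntegrable (-Real.pi) Real.pi).1).mono_set Ioo_subset_Ioc_self
      have hlb : ENNReal.ofReal (2 * Real.pi * L) ≤
          ∫⁻ θ in Set.Ioo (-Real.pi) Real.pi, ENNReal.ofReal (g (circleMap b r θ)) := by
        rw [← ofReal_integral_eq_lintegral_ofReal hInt
          (Filter.Eventually.of_forall fun θ => hgnn _)]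
        exact ENNReal.ofReal_le_ofReal hcirc
      calc ENNReal.ofReal (r * (2 * Real.pi * L))
          = ENNReal.ofReal r * ENNReal.ofReal (2 * Real.pi * L) :=
            ENNReal.ofReal_mul hrpos.le
        _ ≤ ENNReal.ofReal r * ∫⁻ θ in Set.Ioo (-Real.pi) Real.pi,
              ENNReal.ofReal (g (circleMap b r θ)) := mul_le_mul_right hlb _
        _ = ENNReal.ofReal r * ∫⁻ θ in Set.Ioo (-Real.pi) Real.pi,
              ENNReal.ofReal (g (b + r * Complex.exp (θ * Complex.I))) := rfl
    -- outer bound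
    have houter : ENNReal.ofReal (2 * Real.pi * ((3 / 8) * d ^ 2 * L)) ≤
        ∫⁻ r in Set.Ioo (d/2) d, ENNReal.ofReal (r * (2 * Real.pi * L)) := by
      have hInt2 : IntegrableOn (fun r : ℝ => r * (2 * Real.pi * L))
          (Set.Ioo (d/2) d) :=
        (((continuous_id.mul continuous_const).intervalIntegrable (d/2) d).1).mono_set
          Ioo_subset_Ioc_self
      rw [← ofReal_integral_eq_lintegral_ofReal hInt2 ?_]
      · apply ENNReal.ofReal_le_ofReal
        have heval : (∫ r in Set.Ioo (d/2) d, r * (2 * Real.pi * L))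
            = ((d^2 - (d/2)^2)/2) * (2 * Real.pi * L) := by
          rw [← integral_Ioc_eq_integral_Ioo,
            ← intervalIntegral.integral_of_le (by linarith : d/2 ≤ d),
            intervalIntegral.integral_mul_const, integral_id]
        rw [heval]
        nlinarith [sq_nonneg d, hLnn, hπ]
      · apply (ae_restrict_iff' measurableSet_Ioo).mpr
        filter_upwards with r hr
        have : 0 < r := lt_trans (by linarith) hr.1
        positivity
    refine le_trans houter (lintegral_mono_ae ?_)
    exact (ae_restrict_iff' measurableSet_Ioo).mpr
      (Filter.Eventually.of_forall hinner)
  -- conclude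
  rw [h1]
  have h3 : 2 * Real.pi * ((3 / 8) * d ^ 2 * L)
      ≤ (∫⁻ z in A, ENNReal.ofReal (g z)).toReal := by
    have := ENNReal.toReal_mono hfin h2
    rwa [ENNReal.toReal_ofReal (by positivity)] at this
  have h4 : (1 / (2 * Real.pi)) * (2 * Real.pi * ((3 / 8) * d ^ 2 * L))
      = (3 / 8) * d ^ 2 * L := by field_simp
  have h5 := mul_le_mul_of_nonneg_left h3 (show (0:ℝ) ≤ 1 / (2 * Real.pi) by positivity)
  rw [h4] at h5
  exact h5
end

section
/- Suppose h₁ = f_x and h₂ = f_y both satisfy the ℝ-linear Beltrami equation h_{z̄} = μ h_z + ν \overline{h_z} a.e. in Ω, where μ, ν : Ω → ℂ are measurable with |μ| + |ν| ≤ k < 1 a.e., and f ∈ W^{2,1}_loc(Ω). Then h = f_z = (f_x − i f_y)/2 satisfies a.e. the equation (1 − |ν|²) h_{z̄} = μ h_z + μ̄ ν \overline{h_z}. -/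
open Complex

/-- pointwise algebraic form.  At a point, write
`A = (f_x)_z`, `B = (f_x)_z̄`, `C = (f_y)_z`, `D = (f_y)_z̄`.  If `f_x` and `f_y`
satisfy the ℝ-linear Beltrami equation `h_z̄ = μ h_z + ν conj(h_z)` (so `B = μA + ν conj A`
and `D = μC + ν conj C`), and the mixed Wirtinger derivatives commute
(`(f_z̄)_z = (f_z)_z̄`, i.e. `(A + iC)/2 = (B - iD)/2`), then `h = f_z` satisfies
`(1 - |ν|²) h_z̄ = μ h_z + conj μ · ν · conj(h_z)`, where
`h_z = (A - iC)/2` and `h_z̄ = (B - iD)/2`. -/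
theorem stmt13 (μ ν : ℂ) (k : ℝ) (hk : ‖μ‖ + ‖ν‖ ≤ k) (hk1 : k < 1)
    (A B C D : ℂ)
    (hx : B = μ * A + ν * (starRingEnd ℂ) A)
    (hy : D = μ * C + ν * (starRingEnd ℂ) C)
    (hcomm : (A + Complex.I * C) / 2 = (B - Complex.I * D) / 2) :
    ((1 - ‖ν‖ ^ 2 : ℝ) : ℂ) * ((B - Complex.I * D) / 2) =
      μ * ((A - Complex.I * C) / 2) +
        (starRingEnd ℂ) μ * ν * (starRingEnd ℂ) ((A - Complex.I * C) / 2) := by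
  have hν : ((1 - ‖ν‖ ^ 2 : ℝ) : ℂ) = 1 - ν * (starRingEnd ℂ) ν := by
    rw [Complex.mul_conj, Complex.normSq_eq_norm_sq]
    push_cast
    ring
  have hx' := congrArg (starRingEnd ℂ) hx
  have hy' := congrArg (starRingEnd ℂ) hy
  have hc := congrArg (starRingEnd ℂ) hcomm
  simp only [map_div₀, map_add, map_sub, map_mul, Complex.conj_I, map_ofNat] at hc
  simp only [map_add, map_mul, map_sub, Complex.conj_conj] at hx' hy'
  rw [hν, map_div₀, map_sub, map_mul, Complex.conj_I, map_ofNat]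
  norm_num
  linear_combination (1:ℂ)/2 * hx - Complex.I/2 * hy + ν/2 * hx' + (Complex.I * ν)/2 * hy' + ν * (starRingEnd ℂ) ν * hcomm + ν * hc
end
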